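/- If b c s t = 0 for the matrix A = [[0,0,1,0,0],[0,0,0,b,tc],[0,0,0,c,−tb],[0,0,0,0,s],[0,0,0,0,0]] (with b,c,s,t ≥ 0, s²+t²=1, b²+c²=1), then for every real θ the characteristic polynomial of Re(e^{−iθ}A) factors as −λ(λ² − 3/8 + (1/8)√(5 − 4(b² + c²t²)))(λ² − 3/8 − (1/8)√(5 − 4(b² + c²t²))). -/
import Mathlib
open Matrix

open Polynomial in
private lemma aux5 (z w a b g d e s : ℂ) :
    (!![0,0,z*a,0,0; 0,0,0,z*b,z*g; w*a,0,0,z*d,z*e; 0,w*b,w*d,0,z*s; 0,w*g,w*e,w*s,0] : Matrix (Fin 5) (Fin 5) ℂ).charpoly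
    = X^5 + C (-(z*w)*(a^2+b^2+g^2+d^2+e^2+s^2))*X^3
      + C (-(z*w)*(z+w)*(d*e+b*g)*s)*X^2
      + C ((z*w)^2*((b*e-g*d)^2+a^2*(s^2+b^2+g^2)))*X
      + C ((z*w)^2*(z+w)*a^2*b*g*s) := by
  have h : charmatrix (!![0,0,z*a,0,0; 0,0,0,z*b,z*g; w*a,0,0,z*d,z*e; 0,w*b,w*d,0,z*s; 0,w*g,w*e,w*s,0] : Matrix (Fin 5) (Fin 5) ℂ)
      = !![X,0,-C (z*a),0,0; 0,X,0,-C (z*b),-C (z*g); -C (w*a),0,X,-C (z*d),-C (z*e); 0,-C (w*b),-C (w*d),X,-C (z*s); 0,-C (w*g),-C (w*e),-C (w*s),X] := by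
    ext i j : 2
    fin_cases i <;> fin_cases j <;>
      simp [charmatrix_apply, Matrix.one_apply, Matrix.vecHead, Matrix.vecTail]
  rw [Matrix.charpoly, h]
  simp [Matrix.det_succ_row_zero, Fin.sum_univ_succ, Fin.succAbove]
  norm_num [Fin.lt_def, Fin.le_def, show Fin.castSucc (2:Fin 3) = (2:Fin 4) from rfl, show Fin.castSucc (2:Fin 4) = (2:Fin 5) from rfl]
  ring

open Polynomial in
set_option maxHeartbeats 1000000 in
theorem kippenhahn_poly_5x5_circular_factorization (b c s t θ : ℝ)
    (hb : 0 ≤ b) (hc : 0 ≤ c) (hs : 0 ≤ s) (ht : 0 ≤ t)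
    (hst : s ^ 2 + t ^ 2 = 1) (hbc : b ^ 2 + c ^ 2 = 1)
    (h0 : b * c * s * t = 0) :
    let A : Matrix (Fin 5) (Fin 5) ℂ :=
      !![0, 0, 1, 0, 0;
         0, 0, 0, (b : ℂ), ((t * c : ℝ) : ℂ);
         0, 0, 0, (c : ℂ), ((-(t * b) : ℝ) : ℂ);
         0, 0, 0, 0, (s : ℂ);
         0, 0, 0, 0, 0]
    let M : Matrix (Fin 5) (Fin 5) ℂ :=
      (1 / 2 : ℂ) • (Complex.exp (-(θ : ℂ) * Complex.I) • A +
        (Complex.exp (-(θ : ℂ) * Complex.I) • A)ᴴ)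
    Eq (-M.charpoly)
      (-(X * (X ^ 2 - C (3 / 8 : ℂ)
          + C (((1 / 8 * Real.sqrt (5 - 4 * (b ^ 2 + c ^ 2 * t ^ 2)) : ℝ)) : ℂ))
        * (X ^ 2 - C (3 / 8 : ℂ)
          - C (((1 / 8 * Real.sqrt (5 - 4 * (b ^ 2 + c ^ 2 * t ^ 2)) : ℝ)) : ℂ)))) := by
  intro A M
  rw [neg_inj]
  set z : ℂ := Complex.exp (-(θ : ℂ) * Complex.I) with hz
  set w : ℂ := (starRingEnd ℂ) z with hw
  have hzw : z * w = 1 := by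
    rw [hw, hz, ← Complex.exp_conj, ← Complex.exp_add]
    simp [_root_.map_mul, Complex.conj_I, Complex.conj_ofReal]
  have hM : M = !![0,0,z*(1/2),0,0;
      0,0,0,z*((b:ℂ)/2),z*(((t*c:ℝ):ℂ)/2);
      w*(1/2),0,0,z*((c:ℂ)/2),z*(((-(t*b):ℝ):ℂ)/2);
      0,w*((b:ℂ)/2),w*((c:ℂ)/2),0,z*((s:ℂ)/2);
      0,w*(((t*c:ℝ):ℂ)/2),w*(((-(t*b):ℝ):ℂ)/2),w*((s:ℂ)/2),0] := by
    show (1 / 2 : ℂ) • (z • A + (z • A)ᴴ) = _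
    ext i j : 2
    fin_cases i <;> fin_cases j <;>
      simp [A, Matrix.conjTranspose_apply, Complex.conj_ofReal, Matrix.vecHead,
        Matrix.vecTail] <;> ring
  rw [hM, aux5]
  -- scalar coefficient identities
  have hbc' : (b:ℂ)^2 + (c:ℂ)^2 = 1 := by exact_mod_cast congrArg (Complex.ofReal) hbc
  have hst' : (s:ℂ)^2 + (t:ℂ)^2 = 1 := by exact_mod_cast congrArg (Complex.ofReal) hst
  have h0' : (b:ℂ) * c * s * t = 0 := by exact_mod_cast congrArg (Complex.ofReal) h0
  have hD : (0:ℝ) ≤ 5 - 4 * (b ^ 2 + c ^ 2 * t ^ 2) := by nlinarith [sq_nonneg (c*t), sq_nonneg c, sq_nonneg t]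
  set rc : ℂ := (((1 / 8 * Real.sqrt (5 - 4 * (b ^ 2 + c ^ 2 * t ^ 2)) : ℝ)) : ℂ) with hrc
  have hrc2 : rc ^ 2 = (((5 - 4 * (b ^ 2 + c ^ 2 * t ^ 2))/64 : ℝ) : ℂ) := by
    rw [hrc, ← Complex.ofReal_pow, mul_pow, Real.sq_sqrt hD]
    push_cast
    ring
  have e3 : (-(z*w)*((1/2:ℂ)^2+((b:ℂ)/2)^2+(((t*c:ℝ):ℂ)/2)^2+((c:ℂ)/2)^2+(((-(t*b):ℝ):ℂ)/2)^2+((s:ℂ)/2)^2)) = -(3/4) := by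
    push_cast
    linear_combination (-(1/4+((b:ℂ)^2+((t:ℂ)*c)^2+(c:ℂ)^2+((t:ℂ)*b)^2+(s:ℂ)^2)/4))*hzw
      + (-(1+(t:ℂ)^2)/4)*hbc' + (-1/4 : ℂ)*hst'
  have e2 : (-(z*w)*(z+w)*(((c:ℂ)/2)*((((-(t*b)):ℝ):ℂ)/2)+((b:ℂ)/2)*(((t*c:ℝ):ℂ)/2))*((s:ℂ)/2)) = 0 := by
    push_cast; ring
  have e1 : ((z*w)^2*((((b:ℂ)/2)*((((-(t*b)):ℝ):ℂ)/2)-(((t*c:ℝ):ℂ)/2)*((c:ℂ)/2))^2+(1/2:ℂ)^2*(((s:ℂ)/2)^2+((b:ℂ)/2)^2+(((t*c:ℝ):ℂ)/2)^2))) = (3/8:ℂ)^2 - rc^2 := by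
    rw [hrc2]
    push_cast
    linear_combination ((z*w+1)*((((t:ℂ)*((b:ℂ)^2+(c:ℂ)^2))^2)/16+(((s:ℂ))^2+((b:ℂ))^2+(((t:ℂ)*c))^2)/16))*hzw
      + ((t:ℂ)^2*((b:ℂ)^2+(c:ℂ)^2+1)/16)*hbc' + (1/16:ℂ)*hst'
  have e0 : ((z*w)^2*(z+w)*(1/2:ℂ)^2*((b:ℂ)/2)*(((t*c:ℝ):ℂ)/2)*((s:ℂ)/2)) = 0 := by
    push_cast
    linear_combination ((z*w)^2*(z+w)*(1/32:ℂ))*h0'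
  rw [e3, e2, e1, e0]
  have h34 : C (-(3/4 : ℂ)) = -(C (3/8 : ℂ) + C (3/8 : ℂ)) := by
    rw [← map_add, ← map_neg]; norm_num
  rw [h34, map_sub, map_pow, map_pow, map_zero]
  ring
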